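/- The map sending a pair (I,J) of poset ideals with I ⊂ J, I ≠ J, and J \ I connected in P to the pair (A,B) with A = max(J) and B = min(J \ I) ∪ (max(I) ∩ max(J)) (setting min(J \ I) = ∅ if |J \ I| = 1) is a well-defined injection into the set of pairs (A,B) of distinct antichains whose symmetric difference is connected in P. -/

import Mathlib

/-- Indicator vector of a subset `W` of `P` in `ℝ^P`. -/
noncomputable def rho {P : Type*} (W : Set P) : P → ℝ := W.indicator fun _ => 1

/-- The order polytope of a finite poset `P`. -/
def orderPolytope (P : Type*) [Fintype P] [PartialOrder P] : Set (P → ℝ) :=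
  {f | (∀ i, 0 ≤ f i ∧ f i ≤ 1) ∧ ∀ i j : P, i ≤ j → f j ≤ f i}

/-- The chain polytope of a finite poset `P`. -/
def chainPolytope (P : Type*) [Fintype P] [PartialOrder P] : Set (P → ℝ) :=
  {f | (∀ i, 0 ≤ f i) ∧ ∀ C : Finset P, IsMaxChain (· ≤ ·) (C : Set P) → ∑ i ∈ C, f i ≤ 1}

/-- A subset `S` of a poset `P` is connected in `P` if any two of its elements are
joined by a sequence within `S` whose consecutive members are comparable in `P`. -/
def ConnIn {P : Type*} [PartialOrder P] (S : Set P) : Prop :=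
  ∀ x ∈ S, ∀ y ∈ S,
    Relation.ReflTransGen (fun u v => u ∈ S ∧ v ∈ S ∧ (u ≤ v ∨ v ≤ u)) x y

/-- The segment joining `u` and `v` is an edge (one-dimensional face) of `S`. -/
def IsEdgeOf {E : Type*} [AddCommGroup E] [Module ℝ E] (S : Set E) (u v : E) : Prop :=
  u ≠ v ∧ IsExtreme ℝ S (segment ℝ u v)

/-- The set of maximal elements of a subset of a poset. -/
def maxSet {P : Type*} [PartialOrder P] (S : Set P) : Set P :=
  {x | x ∈ S ∧ ∀ y ∈ S, x ≤ y → x = y}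

/-- The set of minimal elements of a subset of a poset. -/
def minSet {P : Type*} [PartialOrder P] (S : Set P) : Set P :=
  {x | x ∈ S ∧ ∀ y ∈ S, y ≤ x → x = y}

/-- The 1-skeleton of the order polytope, combinatorially: vertices are poset
ideals, adjacency is proper inclusion with connected difference. -/
def orderSkeleton (P : Type*) [PartialOrder P] :
    SimpleGraph {I : Set P // IsLowerSet I} :=
  SimpleGraph.fromRel fun I J => I.1 ⊂ J.1 ∧ ConnIn (J.1 \ I.1)

/-- The 1-skeleton of the chain polytope, combinatorially: vertices are antichains,
adjacency is connectedness of the symmetric difference. -/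
def chainSkeleton (P : Type*) [PartialOrder P] :
    SimpleGraph {A : Set P // IsAntichain (· ≤ ·) A} :=
  SimpleGraph.fromRel fun A B => ConnIn ((A.1 \ B.1) ∪ (B.1 \ A.1))

/-- The multiset of vertex degrees of a graph (the degree sequence, up to order). -/
noncomputable def degMultiset {V : Type*} [Fintype V] (G : SimpleGraph V) : Multiset ℕ :=
  Finset.univ.val.map fun v => (G.neighborSet v).ncard

/-- `P` contains the poset `X = {a,b,c,g,h}` with `a<c, b<c, c<g, c<h` as a subposet. -/
def ContainsX (P : Type*) [PartialOrder P] : Prop :=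
  ∃ a b c g h : P, a < c ∧ b < c ∧ c < g ∧ c < h ∧
    ¬ a ≤ b ∧ ¬ b ≤ a ∧ ¬ g ≤ h ∧ ¬ h ≤ g

/-- The pair `(I, J)` of poset ideals with `I ⊂ J` and `J \ I` connected in `P`. -/
def OmegaP {P : Type*} [PartialOrder P] (I J : Set P) : Prop :=
  IsLowerSet I ∧ IsLowerSet J ∧ I ⊂ J ∧ ConnIn (J \ I)

/-- The pair `(A, B)` of distinct antichains with connected symmetric difference. -/
def PsiP {P : Type*} [PartialOrder P] (A B : Set P) : Prop :=
  IsAntichain (· ≤ ·) A ∧ IsAntichain (· ≤ ·) B ∧ A ≠ B ∧ ConnIn ((A \ B) ∪ (B \ A))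

/-- First component of the map `Ω → Ψ`: `A = max J`. -/
def FmapA {P : Type*} [PartialOrder P] (_I J : Set P) : Set P := maxSet J

/-- Second component of the map `Ω → Ψ`:
`B = min(J \ I) ∪ (max I ∩ max J)`, with `min(J \ I) := ∅` when `|J \ I| = 1`. -/
def FmapB {P : Type*} [PartialOrder P] (I J : Set P) : Set P :=
  (if (J \ I).ncard = 1 then ∅ else minSet (J \ I)) ∪ (maxSet I ∩ maxSet J)

noncomputable instance {P : Type*} [Fintype P] [PartialOrder P] :
    Fintype {I : Set P // IsLowerSet I} := Fintype.ofFinite _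

noncomputable instance {P : Type*} [Fintype P] [PartialOrder P] :
    Fintype {A : Set P // IsAntichain (· ≤ ·) A} := Fintype.ofFinite _

section Aux

variable {P : Type*} [Fintype P] [PartialOrder P]

lemma exists_minSet_le {S : Set P} {x : P} (hx : x ∈ S) : ∃ m ∈ minSet S, m ≤ x := by
  obtain ⟨b, hbx, hb⟩ := (Set.toFinite S).exists_le_minimal hx
  exact ⟨b, ⟨hb.1, fun y hy hyb => le_antisymm (hb.2 hy hyb) hyb⟩, hbx⟩

lemma exists_le_maxSet {S : Set P} {x : P} (hx : x ∈ S) : ∃ M ∈ maxSet S, x ≤ M := by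
  obtain ⟨b, hxb, hb⟩ := (Set.toFinite S).exists_le_maximal hx
  exact ⟨b, ⟨hb.1, fun y hy hby => le_antisymm hby (hb.2 hy hby)⟩, hxb⟩

lemma maxSet_antichain (S : Set P) : IsAntichain (· ≤ ·) (maxSet S) :=
  fun _ ha _ hb hne hle => hne (ha.2 _ hb.1 hle)

lemma minSet_antichain (S : Set P) : IsAntichain (· ≤ ·) (minSet S) :=
  fun _ ha _ hb hne hle => hne (hb.2 _ ha.1 hle).symm

lemma rtg_first_step {α : Type*} {R : α → α → Prop} {x y : α}
    (h : Relation.ReflTransGen R x y) : x = y ∨ ∃ c, c ≠ x ∧ R x c := by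
  induction h using Relation.ReflTransGen.head_induction_on with
  | refl => exact Or.inl rfl
  | head h' _ ih =>
    rename_i a c _
    by_cases hac : c = a
    · subst hac; exact ih
    · exact Or.inr ⟨c, hac, h'⟩

lemma conn_exists_comparable {D : Set P} (hconn : ConnIn D) {x y : P}
    (hx : x ∈ D) (hy : y ∈ D) (hne : y ≠ x) :
    ∃ c ∈ D, c ≠ x ∧ (x ≤ c ∨ c ≤ x) := by
  rcases rtg_first_step (hconn x hx y hy) with h | ⟨c, hcx, _, h2, h3⟩
  · exact absurd h.symm hne
  · exact ⟨c, h2, hcx, h3⟩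

lemma connIn_minSet_union_maxSet {D : Set P} (hconn : ConnIn D) :
    ConnIn (minSet D ∪ maxSet D) := by
  set S := minSet D ∪ maxSet D with hS
  set R : P → P → Prop := fun u v => u ∈ S ∧ v ∈ S ∧ (u ≤ v ∨ v ≤ u) with hR
  have key : ∀ x y : P,
      Relation.ReflTransGen (fun u v => u ∈ D ∧ v ∈ D ∧ (u ≤ v ∨ v ≤ u)) x y →
      y ∈ D → ∀ m ∈ minSet D, m ≤ x → ∀ m' ∈ minSet D, m' ≤ y →
      Relation.ReflTransGen R m m' := by
    intro x y h
    induction h using Relation.ReflTransGen.head_induction_on with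
    | refl =>
      intro hy m hm hmy m' hm' hm'y
      obtain ⟨M, hM, hyM⟩ := exists_le_maxSet hy
      have e1 : Relation.ReflTransGen R m M :=
        Relation.ReflTransGen.single
          ⟨Set.mem_union_left _ hm, Set.mem_union_right _ hM, Or.inl (hmy.trans hyM)⟩
      have e2 : Relation.ReflTransGen R M m' :=
        Relation.ReflTransGen.single
          ⟨Set.mem_union_right _ hM, Set.mem_union_left _ hm', Or.inr (hm'y.trans hyM)⟩
      exact e1.trans e2
    | head h' _ ih =>
      intro hy m hm hma m' hm' hm'y
      obtain ⟨ha, hc, hcomp⟩ := h'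
      rcases hcomp with hle | hle
      · exact ih hy m hm (hma.trans hle) m' hm' hm'y
      · obtain ⟨m'', hm'', hm''c⟩ := exists_minSet_le hc
        obtain ⟨M, hM, haM⟩ := exists_le_maxSet ha
        have e1 : Relation.ReflTransGen R m M :=
          Relation.ReflTransGen.single
            ⟨Set.mem_union_left _ hm, Set.mem_union_right _ hM, Or.inl (hma.trans haM)⟩
        have e2 : Relation.ReflTransGen R M m'' :=
          Relation.ReflTransGen.single
            ⟨Set.mem_union_right _ hM, Set.mem_union_left _ hm'',
              Or.inr ((hm''c.trans hle).trans haM)⟩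
        exact (e1.trans e2).trans (ih hy m'' hm'' hm''c m' hm' hm'y)
  intro u hu v hv
  have huD : u ∈ D := hu.elim (fun h => h.1) (fun h => h.1)
  have hvD : v ∈ D := hv.elim (fun h => h.1) (fun h => h.1)
  obtain ⟨m, hm, hmu⟩ := exists_minSet_le huD
  obtain ⟨m', hm', hm'v⟩ := exists_minSet_le hvD
  have h1 : Relation.ReflTransGen R u m :=
    Relation.ReflTransGen.single ⟨hu, Set.mem_union_left _ hm, Or.inr hmu⟩
  have h2 : Relation.ReflTransGen R m m' :=
    key u v (hconn u huD v hvD) hvD m hm hmu m' hm' hm'v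
  have h3 : Relation.ReflTransGen R m' v :=
    Relation.ReflTransGen.single ⟨Set.mem_union_left _ hm', hv, Or.inl hm'v⟩
  exact (h1.trans h2).trans h3

variable {I J : Set P}

lemma omega_up (h : OmegaP I J) : ∀ x ∈ J \ I, ∀ y, x ≤ y → y ∈ J → y ∈ J \ I :=
  fun x hx y hxy hy => ⟨hy, fun hyI => hx.2 (h.1 hxy hyI)⟩

lemma omega_sub (h : OmegaP I J) : I ⊆ J := h.2.2.1.subset

lemma mem_maxSet_I (h : OmegaP I J) {a : P} (ha : a ∈ maxSet J) (haI : a ∈ I) :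
    a ∈ maxSet I :=
  ⟨haI, fun y hy hay => ha.2 y (omega_sub h hy) hay⟩

lemma omega_diff_nonempty (h : OmegaP I J) : (J \ I).Nonempty := by
  obtain ⟨x, hxJ, hxI⟩ := Set.exists_of_ssubset h.2.2.1
  exact ⟨x, hxJ, hxI⟩

lemma minSet_disj_maxSet (h : OmegaP I J) (hcard : (J \ I).ncard ≠ 1) :
    ∀ b ∈ minSet (J \ I), b ∉ maxSet J := by
  rintro b ⟨hbD, hbmin⟩ hbmax
  have hex : ∃ y ∈ J \ I, y ≠ b := by
    by_contra hcon
    push_neg at hcon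
    exact hcard (by
      rw [Set.eq_singleton_iff_unique_mem.mpr ⟨hbD, hcon⟩]
      exact Set.ncard_singleton b)
  obtain ⟨y, hy, hyb⟩ := hex
  obtain ⟨c, hc, hcb, hcomp⟩ := conn_exists_comparable h.2.2.2 hbD hy hyb
  rcases hcomp with hbc | hcb'
  · exact hcb (hbmax.2 c hc.1 hbc).symm
  · exact hcb (hbmin c hc hcb').symm

lemma omega_case1 (h : OmegaP I J) {x : P} (hx : J \ I = {x}) :
    x ∈ maxSet J ∧ FmapB I J = maxSet J \ {x} := by
  have hxD : x ∈ J \ I := by rw [hx]; exact rfl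
  have hxmax : x ∈ maxSet J := by
    refine ⟨hxD.1, fun y hy hxy => ?_⟩
    have : y ∈ J \ I := omega_up h x hxD y hxy hy
    rw [hx] at this
    exact this.symm
  have hc1 : (J \ I).ncard = 1 := by rw [hx]; exact Set.ncard_singleton x
  refine ⟨hxmax, ?_⟩
  simp only [FmapB, if_pos hc1, Set.empty_union]
  ext a
  constructor
  · rintro ⟨haI, haJ⟩
    refine ⟨haJ, fun hax => ?_⟩
    rw [Set.mem_singleton_iff] at hax
    exact hxD.2 (hax ▸ haI.1)
  · rintro ⟨haJ, hax⟩
    rw [Set.mem_singleton_iff] at hax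
    have haI : a ∈ I := by
      by_contra haI
      have : a ∈ J \ I := ⟨haJ.1, haI⟩
      rw [hx] at this
      exact hax this
    exact ⟨mem_maxSet_I h haJ haI, haJ⟩

lemma omega_case2 (h : OmegaP I J) (hcard : (J \ I).ncard ≠ 1) :
    FmapA I J \ FmapB I J = maxSet (J \ I) ∧ FmapB I J \ FmapA I J = minSet (J \ I) := by
  have hB : FmapB I J = minSet (J \ I) ∪ (maxSet I ∩ maxSet J) := by
    simp only [FmapB, if_neg hcard]
  have hmaxD : maxSet (J \ I) = maxSet J ∩ (J \ I) := by
    ext a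
    constructor
    · rintro ⟨haD, hmax⟩
      exact ⟨⟨haD.1, fun y hy hay => hmax y (omega_up h a haD y hay hy) hay⟩, haD⟩
    · rintro ⟨⟨haJ, hmax⟩, haD⟩
      exact ⟨haD, fun y hy hay => hmax y hy.1 hay⟩
  constructor
  · rw [hB, hmaxD]
    ext a
    constructor
    · rintro ⟨haA, haB⟩
      refine ⟨haA, haA.1, fun haI => ?_⟩
      exact haB (Set.mem_union_right _ ⟨mem_maxSet_I h haA haI, haA⟩)
    · rintro ⟨haA, haD⟩
      refine ⟨haA, fun haB => ?_⟩
      rcases haB with hb | hb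
      · exact minSet_disj_maxSet h hcard a hb haA
      · exact haD.2 hb.1.1
  · rw [hB]
    ext b
    constructor
    · rintro ⟨hbB, hbA⟩
      rcases hbB with hb | hb
      · exact hb
      · exact absurd hb.2 hbA
    · intro hb
      exact ⟨Set.mem_union_left _ hb, minSet_disj_maxSet h hcard b hb⟩

lemma omega_welldef (h : OmegaP I J) : PsiP (FmapA I J) (FmapB I J) := by
  by_cases hcard : (J \ I).ncard = 1
  · obtain ⟨x, hx⟩ := Set.ncard_eq_one.mp hcard
    obtain ⟨hxmax, hB⟩ := omega_case1 h hx
    have h1 : FmapA I J \ FmapB I J = {x} := by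
      rw [hB]
      exact Set.diff_diff_cancel_left (Set.singleton_subset_iff.mpr hxmax)
    have h2 : FmapB I J \ FmapA I J = (∅ : Set P) := by
      rw [hB]
      exact Set.diff_eq_empty.mpr Set.diff_subset
    refine ⟨maxSet_antichain J, ?_, ?_, ?_⟩
    · rw [hB]; exact (maxSet_antichain J).subset Set.diff_subset
    · intro hAB
      have hxB : x ∈ FmapB I J := hAB ▸ hxmax
      rw [hB] at hxB
      exact hxB.2 rfl
    · rw [h1, h2, Set.union_empty]
      intro u hu v hv
      rw [Set.mem_singleton_iff] at hu hv
      subst hu; subst hv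
      exact Relation.ReflTransGen.refl
  · obtain ⟨hAB1, hAB2⟩ := omega_case2 h hcard
    have hB : FmapB I J = minSet (J \ I) ∪ (maxSet I ∩ maxSet J) := by
      simp only [FmapB, if_neg hcard]
    obtain ⟨d, hd⟩ := omega_diff_nonempty h
    obtain ⟨m, hm, _⟩ := exists_minSet_le hd
    refine ⟨maxSet_antichain J, ?_, ?_, ?_⟩
    · rw [hB]
      rintro a (ha | ha) b (hb | hb) hne hle
      · exact minSet_antichain _ ha hb hne hle
      · exact (omega_up h a ha.1 b hle hb.2.1).2 hb.1.1
      · have hab : a = b := ha.2.2 b hb.1.1 hle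
        exact hb.1.2 (hab ▸ ha.1.1)
      · exact maxSet_antichain J ha.2 hb.2 hne hle
    · intro hAB
      have hmB : m ∈ FmapB I J := by rw [hB]; exact Set.mem_union_left _ hm
      rw [← hAB] at hmB
      exact minSet_disj_maxSet h hcard m hm hmB
    · rw [hAB1, hAB2, Set.union_comm]
      exact connIn_minSet_union_maxSet h.2.2.2

lemma recover_J (h : OmegaP I J) : J = {x | ∃ a ∈ FmapA I J, x ≤ a} := by
  ext x
  constructor
  · intro hx
    obtain ⟨M, hM, hxM⟩ := exists_le_maxSet hx
    exact ⟨M, hM, hxM⟩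
  · rintro ⟨a, ha, hxa⟩
    exact h.2.1 hxa ha.1

lemma recover_D1 (h : OmegaP I J) (he : FmapB I J \ FmapA I J = ∅) :
    J \ I = FmapA I J \ FmapB I J := by
  by_cases hcard : (J \ I).ncard = 1
  · obtain ⟨x, hx⟩ := Set.ncard_eq_one.mp hcard
    obtain ⟨hxmax, hB⟩ := omega_case1 h hx
    rw [hx, hB]
    exact (Set.diff_diff_cancel_left (Set.singleton_subset_iff.mpr hxmax)).symm
  · obtain ⟨hAB1, hAB2⟩ := omega_case2 h hcard
    obtain ⟨d, hd⟩ := omega_diff_nonempty h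
    obtain ⟨m, hm, _⟩ := exists_minSet_le hd
    rw [hAB2] at he
    exact absurd he (Set.nonempty_iff_ne_empty.mp ⟨m, hm⟩)

lemma recover_D2 (h : OmegaP I J) (hne : (FmapB I J \ FmapA I J).Nonempty) :
    J \ I = {x | x ∈ J ∧ ∃ m ∈ FmapB I J \ FmapA I J, m ≤ x} := by
  by_cases hcard : (J \ I).ncard = 1
  · obtain ⟨x, hx⟩ := Set.ncard_eq_one.mp hcard
    obtain ⟨_, hB⟩ := omega_case1 h hx
    have h2 : FmapB I J \ FmapA I J = (∅ : Set P) := by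
      rw [hB]
      exact Set.diff_eq_empty.mpr Set.diff_subset
    rw [h2] at hne
    exact absurd hne Set.not_nonempty_empty
  · obtain ⟨_, hAB2⟩ := omega_case2 h hcard
    rw [hAB2]
    ext x
    constructor
    · intro hx
      obtain ⟨m, hm, hmx⟩ := exists_minSet_le hx
      exact ⟨hx.1, m, hm, hmx⟩
    · rintro ⟨hxJ, m, hm, hmx⟩
      exact omega_up h m hm.1 x hmx hxJ

end Aux

theorem stmt8 {P : Type*} [Fintype P] [PartialOrder P] :
    (∀ I J : Set P, OmegaP I J → PsiP (FmapA I J) (FmapB I J)) ∧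
    (∀ I J I' J' : Set P, OmegaP I J → OmegaP I' J' →
      FmapA I J = FmapA I' J' → FmapB I J = FmapB I' J' → I = I' ∧ J = J') := by
  refine ⟨fun I J h => omega_welldef h, ?_⟩
  intro I J I' J' h h' hA hB
  have hJ : J = J' := by
    rw [recover_J h, recover_J h', hA]
  have hD : J \ I = J' \ I' := by
    rcases Set.eq_empty_or_nonempty (FmapB I J \ FmapA I J) with he | hne
    · rw [recover_D1 h he, recover_D1 h' (by rw [← hA, ← hB]; exact he), hA, hB]
    · rw [recover_D2 h hne, recover_D2 h' (by rw [← hA, ← hB]; exact hne), hA, hB, hJ]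
  have hI : I = I' := by
    have e1 : J \ (J \ I) = I := Set.diff_diff_cancel_left (omega_sub h)
    have e2 : J' \ (J' \ I') = I' := Set.diff_diff_cancel_left (omega_sub h')
    rw [← e1, ← e2, hD, hJ]
  exact ⟨hI, hJ⟩
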